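/- Let R be a commutative ring with invertible elements x, y. With notation as in the determinant model (blocks M₊ = !![1−x, −y; −x·y⁻¹, 0], M₋ = !![0, −x⁻¹·y; −y⁻¹, 1−x⁻¹]): let n ≥ 2, ε : Fin n → Bool, and σ a permutation of Fin n × Fin 2 with σ(0,a) ∉ {0} × Fin 2 for all a. Set w = (number of i ≠ 0 with ε(i) true) − (number of i ≠ 0 with ε(i) false). Define Z₊ = (−1)^{w+1} det(M(M₊) − P), Z₋ = (−1)^{w−1} det(M(M₋) − P), and Z₀ = (−1)^{w} det(M₀ − P₀), where M(B) is the block-diagonal matrix with block B at index 0 and blocks M₊/M₋ according to ε at indices i ≠ 0, P is the permutation matrix of σ, and (M₀, P₀) is the smoothed configuration on the crossings i ≠ 0 with permutation σ₀ (σ₀(i,a) = σ(0,b) when σ(i,a) = (0,b), and σ₀(i,a) = σ(i,a) otherwise). Then Z₊ − x · Z₋ = (x − 1) · Z₀. -/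

import Mathlib

/-- The local crossing matrix assigned to a positive classical crossing in the
Jaeger–Kauffman–Saleur determinant model. -/
def Mpos {R : Type*} [CommRing R] (x y : Rˣ) : Matrix (Fin 2) (Fin 2) R :=
  !![1 - (x : R), -(y : R); -((x : R) * ((y⁻¹ : Rˣ) : R)), 0]

/-- The local crossing matrix assigned to a negative classical crossing. -/
def Mneg {R : Type*} [CommRing R] (x y : Rˣ) : Matrix (Fin 2) (Fin 2) R :=
  !![0, -(((x⁻¹ : Rˣ) : R) * (y : R)); -((y⁻¹ : Rˣ) : R), 1 - ((x⁻¹ : Rˣ) : R)]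

/-- The block-diagonal matrix indexed by `ι × Fin 2` whose diagonal `2×2` block at
index `i` is `blk i`. -/
def blockDiag {R : Type*} [CommRing R] {ι : Type*} [DecidableEq ι]
    (blk : ι → Matrix (Fin 2) (Fin 2) R) : Matrix (ι × Fin 2) (ι × Fin 2) R :=
  fun p q => if p.1 = q.1 then blk p.1 p.2 q.2 else 0

/-- The permutation matrix of `σ`: entry `1` at position `(p, σ p)` and `0` elsewhere. -/
def permMat (R : Type*) [CommRing R] {ι : Type*} [DecidableEq ι] (σ : Equiv.Perm ι) :
    Matrix ι ι R :=
  fun p q => if σ p = q then 1 else 0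

section SkeinAux

open Matrix in
lemma updRow_comm {R ι κ : Type*} [CommRing R] [DecidableEq ι] (N : Matrix ι κ R)
    {p₀ p₁ : ι} (hp : p₀ ≠ p₁) (a b : κ → R) :
    (N.updateRow p₀ a).updateRow p₁ b = (N.updateRow p₁ b).updateRow p₀ a := by
  ext i j
  rcases eq_or_ne i p₀ with rfl | h0
  · rw [updateRow_ne hp, updateRow_self, updateRow_self]
  · rcases eq_or_ne i p₁ with rfl | h1
    · rw [updateRow_self, updateRow_ne (Ne.symm hp), updateRow_self]
    · rw [updateRow_ne h1, updateRow_ne h0, updateRow_ne h0, updateRow_ne h1]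

open Matrix in
lemma det_skein {R ι : Type*} [CommRing R] [DecidableEq ι] [Fintype ι]
    (N : Matrix ι ι R) (p₀ p₁ : ι) (hp : p₀ ≠ p₁)
    (am ai bm bi : ι → R) (x c : R)
    (hb : bm - bi = c • (am - ai)) :
    ((N.updateRow p₀ (x • am + (1-x) • ai)).updateRow p₁ (x • bm + (1-x) • bi)).det
      - x * ((N.updateRow p₀ am).updateRow p₁ bm).det
      = (1 - x) * ((N.updateRow p₀ ai).updateRow p₁ bi).det := by
  set D : (ι → R) → (ι → R) → R := fun a b => ((N.updateRow p₀ a).updateRow p₁ b).det with hD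
  have expand_fst : ∀ u v b, D (u + v) b = D u b + D v b := by
    intro u v b
    simp only [hD]
    rw [updRow_comm N hp, det_updateRow_add, updRow_comm _ hp.symm, updRow_comm _ hp.symm]
  have smul_fst : ∀ (s : R) u b, D (s • u) b = s * D u b := by
    intro s u b
    simp only [hD]
    rw [updRow_comm N hp, det_updateRow_smul, updRow_comm _ hp.symm]
  have expand_snd : ∀ a u v, D a (u + v) = D a u + D a v := fun a u v =>
    det_updateRow_add _ _ _ _
  have smul_snd : ∀ a (s : R) u, D a (s • u) = s * D a u := fun a s u =>
    det_updateRow_smul _ _ _ _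
  have h1 : D (x • am + (1-x) • ai) (x • bm + (1-x) • bi)
      = x*x*(D am bm) + x*(1-x)*(D am bi) + (1-x)*x*(D ai bm) + (1-x)*(1-x)*(D ai bi) := by
    simp only [expand_fst, expand_snd, smul_fst, smul_snd]
    ring
  have hbm : bm = bi + c • (am - ai) := by
    rw [← hb]; abel
  have e1 : D am bm = D am bi + c * D am (am - ai) := by
    conv_lhs => rw [hbm]
    rw [expand_snd, smul_snd]
  have e2 : D ai bm = D ai bi + c * D ai (am - ai) := by
    conv_lhs => rw [hbm]
    rw [expand_snd, smul_snd]
  have e3 : D am (am - ai) = D (am - ai) (am - ai) + D ai (am - ai) := by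
    have := expand_fst (am - ai) ai (am - ai)
    rw [sub_add_cancel] at this
    exact this
  have e4 : D (am - ai) (am - ai) = 0 := by
    apply det_zero_of_row_eq hp
    rw [updateRow_ne hp, updateRow_self, updateRow_self]
  have h2 : D am bm - D am bi - D ai bm + D ai bi = 0 := by
    linear_combination e1 - e2 + c * e3 + c * e4
  linear_combination h1 + x * (x - 1) * h2

end SkeinAux

def splitE (n : ℕ) (i0 : Fin n) : Fin n × Fin 2 ≃ (Fin 2 ⊕ ({i : Fin n // i ≠ i0} × Fin 2)) where
  toFun p := if h : p.1 = i0 then Sum.inl p.2 else Sum.inr (⟨p.1, h⟩, p.2)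
  invFun q := Sum.elim (fun a => (i0, a)) (fun q => (q.1.1, q.2)) q
  left_inv p := by
    rcases p with ⟨i, a⟩
    by_cases h : i = i0
    · subst h; simp
    · simp [h]
  right_inv q := by
    rcases q with a | ⟨⟨i, h⟩, a⟩
    · simp
    · simp [h]

lemma det_smooth {R : Type*} [CommRing R] {n : ℕ} (i0 : Fin n)
    (σ : Equiv.Perm (Fin n × Fin 2)) (hσ : ∀ a : Fin 2, (σ (i0, a)).1 ≠ i0)
    (σ₀ : Equiv.Perm ({i : Fin n // i ≠ i0} × Fin 2))
    (hσ₀ : ∀ (i : Fin n) (hi : i ≠ i0) (a : Fin 2),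
        ((σ₀ (⟨i, hi⟩, a)).1.1, (σ₀ (⟨i, hi⟩, a)).2) =
          if (σ (i, a)).1 = i0 then σ (i0, (σ (i, a)).2) else σ (i, a))
    (blk : Fin n → Matrix (Fin 2) (Fin 2) R) (hblk : blk i0 = 1) :
    (blockDiag blk - permMat R σ).det
      = (blockDiag (fun i : {i : Fin n // i ≠ i0} => blk i.1) - permMat R σ₀).det := by
  set Bm : Matrix (Fin 2) ({i : Fin n // i ≠ i0} × Fin 2) R :=
    fun a q => - (if σ (i0, a) = (q.1.1, q.2) then 1 else 0) with hBm
  set Cm : Matrix ({i : Fin n // i ≠ i0} × Fin 2) (Fin 2) R :=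
    fun q b => - (if σ (q.1.1, q.2) = (i0, b) then 1 else 0) with hCm
  set Dm : Matrix ({i : Fin n // i ≠ i0} × Fin 2) ({i : Fin n // i ≠ i0} × Fin 2) R :=
    fun q q' => (if q.1.1 = q'.1.1 then blk q.1.1 q.2 q'.2 else 0)
      - (if σ (q.1.1, q.2) = (q'.1.1, q'.2) then 1 else 0) with hDm
  have key : (Matrix.reindex (splitE n i0) (splitE n i0)) (blockDiag blk - permMat R σ)
      = Matrix.fromBlocks 1 Bm Cm Dm := by
    ext q q'
    rcases q with a | ⟨⟨j, hj⟩, c⟩ <;> rcases q' with b | ⟨⟨k, hk⟩, d⟩ <;>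
      simp only [Matrix.reindex_apply, Matrix.submatrix_apply, splitE, Equiv.coe_fn_symm_mk,
        Sum.elim_inl, Sum.elim_inr, Matrix.sub_apply, blockDiag, permMat,
        Matrix.fromBlocks_apply₁₁, Matrix.fromBlocks_apply₁₂, Matrix.fromBlocks_apply₂₁,
        Matrix.fromBlocks_apply₂₂] <;>
      simp -failIfUnchanged only [hBm, hCm, hDm]
    · rw [if_pos trivial, hblk, if_neg (fun h => hσ a (by rw [h])), sub_zero]
    · rw [if_neg (fun h : (i0 : Fin n) = k => hk h.symm), zero_sub]
    · rw [if_neg hj, zero_sub]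
  rw [← Matrix.det_reindex_self (splitE n i0), key, Matrix.det_fromBlocks_one₁₁]
  congr 1
  ext ⟨⟨j, hj⟩, c⟩ ⟨⟨k, hk⟩, d⟩
  have hRB : blockDiag (fun i : {i : Fin n // i ≠ i0} => blk i.1) (⟨j, hj⟩, c) (⟨k, hk⟩, d)
      = (if j = k then blk j c d else 0) := by
    by_cases hjk : j = k
    · subst hjk
      simp [blockDiag]
    · have hne : ¬ ((⟨j, hj⟩ : {i : Fin n // i ≠ i0}) = ⟨k, hk⟩) := by
        simpa [Subtype.ext_iff] using hjk
      simp [blockDiag, hne, hjk]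
  rw [Matrix.sub_apply, Matrix.mul_apply]
  simp only [Matrix.sub_apply, hDm, Matrix.mul_apply, hBm, hCm, Fin.sum_univ_two,
    permMat, neg_mul_neg, hRB]
  have hs0 := hσ₀ j hj c
  have hiff : σ₀ (⟨j, hj⟩, c) = (⟨k, hk⟩, d) ↔
      ((σ₀ (⟨j, hj⟩, c)).1.1, (σ₀ (⟨j, hj⟩, c)).2) = (k, d) := by
    constructor
    · rintro h; rw [h]
    · intro h
      rw [Prod.mk.injEq] at h
      rw [Prod.ext_iff]
      exact ⟨Subtype.ext h.1, h.2⟩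
  by_cases h : (σ (j, c)).1 = i0
  · rw [if_pos h] at hs0
    have hnk : ¬ σ (j, c) = (k, d) := fun he => hk (by rw [he] at h; exact h)
    rw [if_neg hnk]
    have hjc : σ (j, c) = (i0, (σ (j, c)).2) := by
      rw [Prod.ext_iff]; exact ⟨h, rfl⟩
    have hrhs : (if σ₀ (⟨j, hj⟩, c) = (⟨k, hk⟩, d) then (1:R) else 0)
        = (if σ (i0, (σ (j, c)).2) = (k, d) then (1:R) else 0) := by
      by_cases hc : σ₀ (⟨j, hj⟩, c) = (⟨k, hk⟩, d)
      · rw [if_pos hc, if_pos (hs0 ▸ hiff.mp hc)]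
      · rw [if_neg hc, if_neg (fun he => hc (hiff.mpr (hs0.trans he)))]
    rw [hrhs]
    by_cases h0 : (σ (j, c)).2 = 0
    · rw [h0] at hjc
      have e0 : σ (j, c) = (i0, 0) := hjc
      have e1 : ¬ σ (j, c) = (i0, 1) := by rw [e0]; simp
      rw [if_pos e0, if_neg e1, one_mul, zero_mul, add_zero, h0]
      ring
    · have h1 : (σ (j, c)).2 = 1 := by omega
      rw [h1] at hjc
      have e1 : σ (j, c) = (i0, 1) := hjc
      have e0 : ¬ σ (j, c) = (i0, 0) := by rw [e1]; simp
      rw [if_pos e1, if_neg e0, one_mul, zero_mul, zero_add, h1]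
      ring
  · rw [if_neg h] at hs0
    have h0 : ∀ b : Fin 2, ¬ σ (j, c) = (i0, b) := fun b he => h (by rw [he])
    rw [if_neg (h0 0), if_neg (h0 1)]
    have hrhs : (if σ₀ (⟨j, hj⟩, c) = (⟨k, hk⟩, d) then (1:R) else 0)
        = (if σ (j, c) = (k, d) then (1:R) else 0) := by
      by_cases hc : σ₀ (⟨j, hj⟩, c) = (⟨k, hk⟩, d)
      · rw [if_pos hc, if_pos (hs0 ▸ hiff.mp hc)]
      · rw [if_neg hc, if_neg (fun he => hc (hiff.mpr (hs0.trans he)))]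
    rw [hrhs]
    ring

/-- the row of `blockDiag (blk B) - permMat σ` at index `(i0, a)` -/
def rowJ {R : Type*} [CommRing R] {n : ℕ} (i0 : Fin n) (σ : Equiv.Perm (Fin n × Fin 2))
    (B : Matrix (Fin 2) (Fin 2) R) (a : Fin 2) : Fin n × Fin 2 → R :=
  fun q => (if i0 = q.1 then B a q.2 else 0) - (if σ (i0, a) = q then 1 else 0)

lemma blockDiag_update {R : Type*} [CommRing R] {n : ℕ} (i0 : Fin n)
    (σ : Equiv.Perm (Fin n × Fin 2)) (bf : Fin n → Matrix (Fin 2) (Fin 2) R)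
    (B C : Matrix (Fin 2) (Fin 2) R) :
    blockDiag (fun i => if i = i0 then B else bf i) - permMat R σ
      = ((blockDiag (fun i => if i = i0 then C else bf i) - permMat R σ).updateRow
          (i0, (0 : Fin 2)) (rowJ i0 σ B 0)).updateRow (i0, (1 : Fin 2)) (rowJ i0 σ B 1) := by
  ext ⟨i, a⟩ ⟨k, b⟩
  rcases eq_or_ne ((i, a) : Fin n × Fin 2) (i0, (1 : Fin 2)) with h1 | h1
  · rw [h1, Matrix.updateRow_self]
    simp [blockDiag, permMat, rowJ, eq_comm]
  · rw [Matrix.updateRow_ne h1]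
    rcases eq_or_ne ((i, a) : Fin n × Fin 2) (i0, (0 : Fin 2)) with h0 | h0
    · rw [h0, Matrix.updateRow_self]
      simp [blockDiag, permMat, rowJ, eq_comm]
    · rw [Matrix.updateRow_ne h0]
      have hi : i ≠ i0 := by
        intro h
        subst h
        have ha : a = 0 ∨ a = 1 := by omega
        rcases ha with ha | ha
        · exact h0 (by rw [ha])
        · exact h1 (by rw [ha])
      simp [blockDiag, permMat, hi]

lemma rowJ_skein {R : Type*} [CommRing R] {n : ℕ} (i0 : Fin n)
    (σ : Equiv.Perm (Fin n × Fin 2)) (x y : Rˣ) (a : Fin 2) :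
    rowJ i0 σ (Mpos x y) a
      = (x : R) • rowJ i0 σ (Mneg x y) a
        + (1 - (x : R)) • rowJ i0 σ (1 : Matrix (Fin 2) (Fin 2) R) a := by
  funext ⟨k, b⟩
  simp only [rowJ, Pi.add_apply, Pi.smul_apply, smul_eq_mul]
  by_cases h : i0 = k
  · rw [if_pos h, if_pos h, if_pos h]
    fin_cases a <;> fin_cases b <;>
      simp [Mpos, Mneg, Matrix.one_apply, Fin.mk_zero, Fin.mk_one] <;>
      (try split_ifs) <;>
      first
        | ring1
        | linear_combination (-(y : R)) * x.mul_inv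
        | linear_combination (y : R) * x.mul_inv
        | linear_combination x.mul_inv
        | linear_combination (-(1 : R)) * x.mul_inv
  · rw [if_neg h, if_neg h, if_neg h]
    ring

lemma rowJ_diff {R : Type*} [CommRing R] {n : ℕ} (i0 : Fin n)
    (σ : Equiv.Perm (Fin n × Fin 2)) (x y : Rˣ) :
    rowJ i0 σ (Mneg x y) 1 - rowJ i0 σ (1 : Matrix (Fin 2) (Fin 2) R) 1
      = ((y⁻¹ : Rˣ) : R) • (rowJ i0 σ (Mneg x y) 0 - rowJ i0 σ (1 : Matrix (Fin 2) (Fin 2) R) 0) := by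
  funext ⟨k, b⟩
  simp only [rowJ, Pi.sub_apply, Pi.smul_apply, smul_eq_mul]
  by_cases h : i0 = k
  · rw [if_pos h, if_pos h, if_pos h, if_pos h]
    fin_cases b <;>
      simp [Mneg, Matrix.one_apply, Fin.mk_zero, Fin.mk_one] <;>
      (try split_ifs) <;>
      first
        | ring1
        | linear_combination (-((x⁻¹ : Rˣ) : R)) * y.inv_mul
        | linear_combination ((x⁻¹ : Rˣ) : R) * y.inv_mul
  · rw [if_neg h, if_neg h, if_neg h, if_neg h]
    ring

/-- The Conway skein relation in the determinant model, with the writhe signs included: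
`Z₊ − x · Z₋ = (x − 1) · Z₀`, where the crossing being modified sits at index `0`. -/
theorem conway_skein_relation {R : Type*} [CommRing R] (x y : Rˣ)
    (n : ℕ) (hn : 2 ≤ n) (ε : Fin n → Bool) (σ : Equiv.Perm (Fin n × Fin 2)) :
    let i0 : Fin n := ⟨0, by omega⟩
    ∀ (_ : ∀ a : Fin 2, (σ (i0, a)).1 ≠ i0)
      (σ₀ : Equiv.Perm ({i : Fin n // i ≠ i0} × Fin 2))
      (_ : ∀ (i : Fin n) (hi : i ≠ i0) (a : Fin 2),
        ((σ₀ (⟨i, hi⟩, a)).1.1, (σ₀ (⟨i, hi⟩, a)).2) =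
          if (σ (i, a)).1 = i0 then σ (i0, (σ (i, a)).2) else σ (i, a)),
    let w : ℤ := ((Finset.univ.filter fun i : Fin n => i ≠ i0 ∧ ε i = true).card : ℤ)
      - ((Finset.univ.filter fun i : Fin n => i ≠ i0 ∧ ε i = false).card : ℤ)
    let blk : Matrix (Fin 2) (Fin 2) R → Fin n → Matrix (Fin 2) (Fin 2) R :=
      fun B i => if i = i0 then B else if ε i then Mpos x y else Mneg x y
    let P : Matrix (Fin n × Fin 2) (Fin n × Fin 2) R := permMat R σ
    let Zpos : R := (((-1 : Rˣ) ^ (w + 1) : Rˣ) : R) * (blockDiag (blk (Mpos x y)) - P).det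
    let Zneg : R := (((-1 : Rˣ) ^ (w - 1) : Rˣ) : R) * (blockDiag (blk (Mneg x y)) - P).det
    let Zzero : R := (((-1 : Rˣ) ^ w : Rˣ) : R) *
      (blockDiag (fun i : {i : Fin n // i ≠ i0} => if ε i.1 then Mpos x y else Mneg x y)
        - permMat R σ₀).det
    Zpos - (x : R) * Zneg = ((x : R) - 1) * Zzero := by
  intro i0 hσ σ₀ hσ₀ w blk P Zpos Zneg Zzero
  have hblk : blk = fun B i => if i = i0 then B else if ε i then Mpos x y else Mneg x y := rfl
  have hP : P = permMat R σ := rfl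
  have hZp : Zpos = (((-1 : Rˣ) ^ (w + 1) : Rˣ) : R) * (blockDiag (blk (Mpos x y)) - P).det := rfl
  have hZm : Zneg = (((-1 : Rˣ) ^ (w - 1) : Rˣ) : R) * (blockDiag (blk (Mneg x y)) - P).det := rfl
  have hZz : Zzero = (((-1 : Rˣ) ^ w : Rˣ) : R) *
      (blockDiag (fun i : {i : Fin n // i ≠ i0} => if ε i.1 then Mpos x y else Mneg x y)
        - permMat R σ₀).det := rfl
  rw [hZp, hZm, hZz]
  -- express the three matrices as row-updates of the negative-crossing matrix
  have epos : blockDiag (blk (Mpos x y)) - P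
      = ((blockDiag (blk (Mneg x y)) - P).updateRow (i0, (0 : Fin 2))
          (rowJ i0 σ (Mpos x y) 0)).updateRow (i0, (1 : Fin 2)) (rowJ i0 σ (Mpos x y) 1) := by
    rw [hblk, hP]
    exact blockDiag_update i0 σ (fun i => if ε i then Mpos x y else Mneg x y) _ _
  have eneg : blockDiag (blk (Mneg x y)) - P
      = ((blockDiag (blk (Mneg x y)) - P).updateRow (i0, (0 : Fin 2))
          (rowJ i0 σ (Mneg x y) 0)).updateRow (i0, (1 : Fin 2)) (rowJ i0 σ (Mneg x y) 1) := by
    rw [hblk, hP]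
    exact blockDiag_update i0 σ (fun i => if ε i then Mpos x y else Mneg x y) _ _
  have eI : blockDiag (blk (1 : Matrix (Fin 2) (Fin 2) R)) - P
      = ((blockDiag (blk (Mneg x y)) - P).updateRow (i0, (0 : Fin 2))
          (rowJ i0 σ (1 : Matrix (Fin 2) (Fin 2) R) 0)).updateRow (i0, (1 : Fin 2))
            (rowJ i0 σ (1 : Matrix (Fin 2) (Fin 2) R) 1) := by
    rw [hblk, hP]
    exact blockDiag_update i0 σ (fun i => if ε i then Mpos x y else Mneg x y) _ _
  have key1 : (blockDiag (blk (Mpos x y)) - P).det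
      - (x : R) * (blockDiag (blk (Mneg x y)) - P).det
      = (1 - (x : R)) * (blockDiag (blk (1 : Matrix (Fin 2) (Fin 2) R)) - P).det := by
    rw [epos, eI]
    nth_rewrite 2 [eneg]
    rw [rowJ_skein i0 σ x y 0, rowJ_skein i0 σ x y 1]
    exact det_skein _ (i0, (0 : Fin 2)) (i0, (1 : Fin 2)) (by simp) _ _ _ _ _ _ (rowJ_diff i0 σ x y)
  have key2 : (blockDiag (blk (1 : Matrix (Fin 2) (Fin 2) R)) - P).det
      = (blockDiag (fun i : {i : Fin n // i ≠ i0} => if ε i.1 then Mpos x y else Mneg x y)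
          - permMat R σ₀).det := by
    have h1 := det_smooth i0 σ hσ σ₀ hσ₀ (blk (1 : Matrix (Fin 2) (Fin 2) R))
      (by rw [hblk]; simp)
    rw [hP, h1]
    congr 1
    have hfun : (fun i : {i : Fin n // i ≠ i0} => blk (1 : Matrix (Fin 2) (Fin 2) R) i.1)
        = (fun i : {i : Fin n // i ≠ i0} => if ε i.1 then Mpos x y else Mneg x y) := by
      funext i
      rw [hblk]
      simp [i.2]
    rw [hfun]
  have hu1 : (((-1 : Rˣ) ^ (w + 1) : Rˣ) : R) = -(((-1 : Rˣ) ^ w : Rˣ) : R) := by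
    rw [zpow_add_one, Units.val_mul, Units.val_neg, Units.val_one]
    ring
  have hu2 : (((-1 : Rˣ) ^ (w - 1) : Rˣ) : R) = -(((-1 : Rˣ) ^ w : Rˣ) : R) := by
    have h : ((-1 : Rˣ) ^ w) = ((-1 : Rˣ) ^ (w - 1)) * (-1) := by
      rw [← zpow_add_one, sub_add_cancel]
    have h2 : (((-1 : Rˣ) ^ w : Rˣ) : R) = (((-1 : Rˣ) ^ (w - 1) : Rˣ) : R) * (-1 : R) := by
      rw [h, Units.val_mul, Units.val_neg, Units.val_one]
    linear_combination h2
  rw [hu1, hu2]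
  linear_combination (-((((-1 : Rˣ) ^ w : Rˣ) : R))) * key1
    + ((x : R) - 1) * ((((-1 : Rˣ) ^ w : Rˣ) : R)) * key2
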